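/- The transversal Hadamard operator H_g^{⊗7} acts as the logical Hadamard on the Steane code: H_g^{⊗7}|0_L⟩ = (|0_L⟩ + |1_L⟩)/√2 and H_g^{⊗7}|1_L⟩ = (|0_L⟩ − |1_L⟩)/√2. -/
import Mathlib


/-- The 3×7 parity-check matrix of the [7,4] Hamming code over F₂. -/
def Hmat : Matrix (Fin 3) (Fin 7) (ZMod 2) :=
  !![1,0,1,0,1,0,1; 0,1,1,0,0,1,1; 0,0,0,1,1,1,1]

/-- The Steane logical zero state `|0_L⟩ = (1/√8) Σ_{v∈C, wt(v) even} |v⟩`. -/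
noncomputable def ket0L : (Fin 7 → ZMod 2) → ℂ := fun w =>
  if Hmat.mulVec w = 0 ∧ Even (hammingNorm w) then (Real.sqrt 8 : ℂ)⁻¹ else 0

/-- The Steane logical one state `|1_L⟩ = (1/√8) Σ_{v∈C, wt(v) odd} |v⟩`. -/
noncomputable def ket1L : (Fin 7 → ZMod 2) → ℂ := fun w =>
  if Hmat.mulVec w = 0 ∧ Odd (hammingNorm w) then (Real.sqrt 8 : ℂ)⁻¹ else 0

/-- The 7-fold tensor product of single-qubit operators. -/
noncomputable def tensorOp (A : Fin 7 → Matrix (ZMod 2) (ZMod 2) ℂ) :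
    ((Fin 7 → ZMod 2) → ℂ) → ((Fin 7 → ZMod 2) → ℂ) :=
  fun ψ v => ∑ w : Fin 7 → ZMod 2, (∏ i, A i (v i) (w i)) * ψ w

/-- The Hadamard gate `H_g = (1/√2)[[1,1],[1,−1]]`, indexed by `ZMod 2`. -/
noncomputable def Hgate : Matrix (ZMod 2) (ZMod 2) ℂ :=
  Matrix.of fun a b => (Real.sqrt 2 : ℂ)⁻¹ * (if a = 1 ∧ b = 1 then -1 else 1)

def sgn (v w : Fin 7 → ZMod 2) : ℤ := ∏ i, (if v i = 1 ∧ w i = 1 then -1 else 1)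

set_option maxRecDepth 40000 in
lemma key0 : ∀ v : Fin 7 → ZMod 2,
    (∑ w : Fin 7 → ZMod 2, if Hmat.mulVec w = 0 ∧ Even (hammingNorm w) then sgn v w else 0)
    = 8 * ((if Hmat.mulVec v = 0 ∧ Even (hammingNorm v) then 1 else 0)
         + (if Hmat.mulVec v = 0 ∧ Odd (hammingNorm v) then 1 else 0)) := by decide

set_option maxRecDepth 40000 in
lemma key1 : ∀ v : Fin 7 → ZMod 2,
    (∑ w : Fin 7 → ZMod 2, if Hmat.mulVec w = 0 ∧ Odd (hammingNorm w) then sgn v w else 0)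
    = 8 * ((if Hmat.mulVec v = 0 ∧ Even (hammingNorm v) then 1 else 0)
         - (if Hmat.mulVec v = 0 ∧ Odd (hammingNorm v) then 1 else 0)) := by decide

lemma prod_Hgate (v w : Fin 7 → ZMod 2) :
    (∏ i, Hgate (v i) (w i)) = ((Real.sqrt 2 : ℂ))⁻¹ ^ 7 * ((sgn v w : ℤ) : ℂ) := by
  simp only [Hgate, Matrix.of_apply, sgn, Finset.prod_mul_distrib, Finset.prod_const,
    Finset.card_univ, Fintype.card_fin]
  push_cast [apply_ite (Int.cast : ℤ → ℂ)]
  ring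

lemma c7 : ((Real.sqrt 2 : ℂ))⁻¹ ^ 7 * 8 = (Real.sqrt 2 : ℂ)⁻¹ := by
  have h2 : Real.sqrt 2 ^ 7 = 8 * Real.sqrt 2 := by
    calc Real.sqrt 2 ^ 7 = (Real.sqrt 2 ^ 2) ^ 3 * Real.sqrt 2 := by ring
    _ = 8 * Real.sqrt 2 := by rw [Real.sq_sqrt (by norm_num : (2:ℝ) ≥ 0)]; norm_num
  have hnz : (Real.sqrt 2 : ℂ) ≠ 0 := by
    simpa using Real.sqrt_ne_zero'.mpr (by norm_num : (0:ℝ) < 2)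
  have h2' : (Real.sqrt 2 : ℂ) ^ 7 = 8 * (Real.sqrt 2 : ℂ) := by
    exact_mod_cast congrArg (Complex.ofReal) h2
  rw [inv_pow, h2', mul_inv]
  field_simp


/-- The transversal Hadamard operator `H_g^{⊗7}` acts as the logical Hadamard on
the Steane code: `H_g^{⊗7}|0_L⟩ = (|0_L⟩ + |1_L⟩)/√2` and
`H_g^{⊗7}|1_L⟩ = (|0_L⟩ − |1_L⟩)/√2`. -/
theorem transversal_H_is_logical_H :
    tensorOp (fun _ => Hgate) ket0L = (Real.sqrt 2 : ℂ)⁻¹ • (ket0L + ket1L) ∧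
    tensorOp (fun _ => Hgate) ket1L = (Real.sqrt 2 : ℂ)⁻¹ • (ket0L - ket1L) := by
  set s2 : ℂ := (Real.sqrt 2 : ℂ)⁻¹ with hs2
  set s8 : ℂ := (Real.sqrt 8 : ℂ)⁻¹ with hs8
  constructor
  · funext v
    simp only [tensorOp, ket0L, ket1L, Pi.smul_apply, Pi.add_apply, smul_eq_mul, prod_Hgate]
    have step : ∀ w : Fin 7 → ZMod 2,
        (s2 ^ 7 * ((sgn v w : ℤ) : ℂ)) *
          (if Hmat.mulVec w = 0 ∧ Even (hammingNorm w) then s8 else 0)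
        = (s2 ^ 7 * s8) *
          (((if Hmat.mulVec w = 0 ∧ Even (hammingNorm w) then sgn v w else 0 : ℤ)) : ℂ) := by
      intro w; split <;> push_cast <;> ring
    rw [Finset.sum_congr rfl (fun w _ => step w), ← Finset.mul_sum]
    rw [show (∑ w : Fin 7 → ZMod 2,
        (((if Hmat.mulVec w = 0 ∧ Even (hammingNorm w) then sgn v w else 0 : ℤ)) : ℂ))
        = (((∑ w : Fin 7 → ZMod 2,
            (if Hmat.mulVec w = 0 ∧ Even (hammingNorm w) then sgn v w else 0 : ℤ)) : ℤ) : ℂ) by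
      push_cast; ring]
    rw [key0 v]
    have hE : (if Hmat.mulVec v = 0 ∧ Even (hammingNorm v) then s8 else 0)
        = s8 * (if Hmat.mulVec v = 0 ∧ Even (hammingNorm v) then (1:ℂ) else 0) := by
      split <;> simp
    have hO : (if Hmat.mulVec v = 0 ∧ Odd (hammingNorm v) then s8 else 0)
        = s8 * (if Hmat.mulVec v = 0 ∧ Odd (hammingNorm v) then (1:ℂ) else 0) := by
      split <;> simp
    rw [hE, hO]
    push_cast
    linear_combination (s8 * ((if Hmat.mulVec v = 0 ∧ Even (hammingNorm v) then (1:ℂ) else 0)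
      + (if Hmat.mulVec v = 0 ∧ Odd (hammingNorm v) then (1:ℂ) else 0))) * c7
  · funext v
    simp only [tensorOp, ket0L, ket1L, Pi.smul_apply, Pi.sub_apply, smul_eq_mul, prod_Hgate]
    have step : ∀ w : Fin 7 → ZMod 2,
        (s2 ^ 7 * ((sgn v w : ℤ) : ℂ)) *
          (if Hmat.mulVec w = 0 ∧ Odd (hammingNorm w) then s8 else 0)
        = (s2 ^ 7 * s8) *
          (((if Hmat.mulVec w = 0 ∧ Odd (hammingNorm w) then sgn v w else 0 : ℤ)) : ℂ) := by
      intro w; split <;> push_cast <;> ring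
    rw [Finset.sum_congr rfl (fun w _ => step w), ← Finset.mul_sum]
    rw [show (∑ w : Fin 7 → ZMod 2,
        (((if Hmat.mulVec w = 0 ∧ Odd (hammingNorm w) then sgn v w else 0 : ℤ)) : ℂ))
        = (((∑ w : Fin 7 → ZMod 2,
            (if Hmat.mulVec w = 0 ∧ Odd (hammingNorm w) then sgn v w else 0 : ℤ)) : ℤ) : ℂ) by
      push_cast; ring]
    rw [key1 v]
    have hE : (if Hmat.mulVec v = 0 ∧ Even (hammingNorm v) then s8 else 0)
        = s8 * (if Hmat.mulVec v = 0 ∧ Even (hammingNorm v) then (1:ℂ) else 0) := by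
      split <;> simp
    have hO : (if Hmat.mulVec v = 0 ∧ Odd (hammingNorm v) then s8 else 0)
        = s8 * (if Hmat.mulVec v = 0 ∧ Odd (hammingNorm v) then (1:ℂ) else 0) := by
      split <;> simp
    rw [hE, hO]
    push_cast
    linear_combination (s8 * ((if Hmat.mulVec v = 0 ∧ Even (hammingNorm v) then (1:ℂ) else 0)
      - (if Hmat.mulVec v = 0 ∧ Odd (hammingNorm v) then (1:ℂ) else 0))) * c7
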